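/- The maps ρ_λ form a representation of the based path group of the ax+b group: for t > 0, λ : [0,2π] → ℂ with Re λ, Im λ ∈ L²([0,2π]), α₁, α₂ ∈ C²([0,2π],ℝ) with α₁(0) = α₂(0) = 0, and b₁, b₂ ∈ L²([0,2π],ℝ), one has the pointwise operator identity ρ_λ(α₁,b₁) ∘ ρ_λ(α₂,b₂) = ρ_λ(α₁+α₂, e^{α₁}b₂ + b₁) on all functions f : C₀ → ℂ, where (e^{α₁}b₂)(u) = e^{α₁(u)} b₂(u) and the group law of the path group is (e^{α₁},b₁)·(e^{α₂},b₂) = (e^{α₁+α₂}, e^{α₁}b₂+b₁). -/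

import Mathlib

open MeasureTheory Real

/-- Extension of a function on `[0, 2π]` to `ℝ` (by `0` outside), used to write integrals
over `[0, 2π]` of functionals of a path. -/
noncomputable def pathExt (x : Set.Icc (0 : ℝ) (2 * π) → ℝ) : ℝ → ℝ :=
  fun u => if h : u ∈ Set.Icc (0 : ℝ) (2 * π) then x ⟨u, h⟩ else 0

lemma two_pi_nonneg : (0:ℝ) ≤ 2 * π := by positivity

lemma pathExt_eq_indicator (x : Set.Icc (0 : ℝ) (2 * π) → ℝ) :
    pathExt x = (Set.Icc (0:ℝ) (2*π)).indicator
      (fun u => x (Set.projIcc 0 (2*π) two_pi_nonneg u)) := by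
  funext u
  by_cases h : u ∈ Set.Icc (0:ℝ) (2*π)
  · rw [Set.indicator_of_mem h, pathExt, dif_pos h, Set.projIcc_of_mem]
  · rw [Set.indicator_of_notMem h, pathExt, dif_neg h]

lemma pathExt_measurable (x : Set.Icc (0 : ℝ) (2 * π) → ℝ) (hx : Continuous x) :
    Measurable (pathExt x) := by
  rw [pathExt_eq_indicator]
  exact ((hx.comp continuous_projIcc).measurable).indicator measurableSet_Icc

lemma pathExt_bound (x : Set.Icc (0 : ℝ) (2 * π) → ℝ) (hx : Continuous x) :
    ∃ M, ∀ u, |pathExt x u| ≤ M := by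
  obtain ⟨z, _, hz⟩ := isCompact_univ.exists_isMaxOn
    ⟨⟨0, Set.left_mem_Icc.mpr two_pi_nonneg⟩, trivial⟩
    ((continuous_abs.comp hx)).continuousOn
  refine ⟨|x z|, fun u => ?_⟩
  unfold pathExt
  split_ifs with h
  · exact hz (by trivial : (⟨u, h⟩ : Set.Icc (0:ℝ) (2*π)) ∈ Set.univ)
  · simp

lemma memLp_complex (lam : ℝ → ℂ) {μ : Measure ℝ}
    (hRe : MemLp (fun u => (lam u).re) 2 μ) (hIm : MemLp (fun u => (lam u).im) 2 μ) :
    MemLp lam 2 μ :=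
  memLp_re_im_iff.mp ⟨hRe, hIm⟩

lemma intervalIntegrable_main (lam : ℝ → ℂ)
    (hlamRe : MemLp (fun u => (lam u).re) 2 (volume.restrict (Set.Ioc 0 (2 * π))))
    (hlamIm : MemLp (fun u => (lam u).im) 2 (volume.restrict (Set.Ioc 0 (2 * π))))
    (b : ℝ → ℝ) (hb : MemLp b 2 (volume.restrict (Set.Ioc 0 (2 * π))))
    (φ : ℝ → ℝ) (hφm : Measurable φ) (hφb : ∃ M, ∀ u, |φ u| ≤ M) :
    IntervalIntegrable (fun u => lam u * (b u : ℂ) * Complex.exp ((φ u : ℝ) : ℂ))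
      volume 0 (2 * π) := by
  obtain ⟨M, hM⟩ := hφb
  have hlam := memLp_complex lam hlamRe hlamIm
  have hbC : MemLp (fun u => (b u : ℂ)) 2 (volume.restrict (Set.Ioc 0 (2 * π))) := hb.ofReal
  have hprod : MemLp (lam • fun u => (b u : ℂ)) 1 (volume.restrict (Set.Ioc 0 (2 * π))) :=
    hbC.smul hlam (hpqr := ⟨by simp [ENNReal.inv_two_add_inv_two, one_div]⟩)
  have hint : Integrable (fun u => lam u * (b u : ℂ))
      (volume.restrict (Set.Ioc 0 (2 * π))) := by
    have := memLp_one_iff_integrable.mp hprod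
    simpa [Pi.smul_apply, smul_eq_mul, Pi.mul_def] using this
  have hmeas : AEStronglyMeasurable (fun u => Complex.exp ((φ u : ℝ) : ℂ))
      (volume.restrict (Set.Ioc 0 (2 * π))) :=
    (Complex.continuous_exp.measurable.comp
      (Complex.measurable_ofReal.comp hφm)).aestronglyMeasurable
  have hbdd : Integrable (fun u => Complex.exp ((φ u : ℝ) : ℂ) * (lam u * (b u : ℂ)))
      (volume.restrict (Set.Ioc 0 (2 * π))) := by
    refine hint.bdd_mul (c := Real.exp M) hmeas (Filter.Eventually.of_forall fun u => ?_)
    rw [Complex.norm_exp]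
    simp only [Complex.ofReal_re]
    exact Real.exp_le_exp.mpr ((le_abs_self _).trans (hM u))
  rw [intervalIntegrable_iff_integrableOn_Ioc_of_le two_pi_nonneg]
  have : (fun u => lam u * (b u : ℂ) * Complex.exp ((φ u : ℝ) : ℂ))
      = fun u => Complex.exp ((φ u : ℝ) : ℂ) * (lam u * (b u : ℂ)) := by
    funext u; ring
  rw [IntegrableOn, this]
  exact hbdd

lemma intervalIntegrable_pathExt_mul (x : Set.Icc (0 : ℝ) (2 * π) → ℝ) (hx : Continuous x)
    (g : ℝ → ℝ) (hg : Continuous g) :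
    IntervalIntegrable (fun u => pathExt x u * g u) volume 0 (2 * π) := by
  obtain ⟨M, hM⟩ := pathExt_bound x hx
  have hint : Integrable g (volume.restrict (Set.Ioc 0 (2 * π))) :=
    hg.integrableOn_Ioc
  have := hint.bdd_mul (c := M) (pathExt_measurable x hx).aestronglyMeasurable
    (Filter.Eventually.of_forall fun u => by simpa [Real.norm_eq_abs] using hM u)
  rw [intervalIntegrable_iff_integrableOn_Ioc_of_le two_pi_nonneg]
  exact this

/-- The integration-by-parts form `⟨h,x⟩ = h'(2π)x(2π) - ∫₀^{2π} x(u)h''(u) du` of the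
Stieltjes integral `∫₀^{2π} h'(u) dx(u)`. -/
noncomputable def wienerPairing (h : ℝ → ℝ) (x : Set.Icc (0 : ℝ) (2 * π) → ℝ) : ℝ :=
  deriv h (2 * π) * pathExt x (2 * π)
    - ∫ u in (0 : ℝ)..(2 * π), pathExt x u * deriv (deriv h) u

/-- The operator `ρ_λ(α, b)` of the based path group of the `ax+b` group, acting on
functionals of paths `x` on `[0,2π]`:
`(ρ_λ(α,b)f)(x) = exp(-(1/(4t))∫₀^{2π}α'(u)² du - (1/(2t))⟨α,x⟩)
  · exp(∫₀^{2π} λ(u)b(u)e^{x(u)} du) · f(x+α)`. -/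
noncomputable def wienerRho (t : ℝ) (lam : ℝ → ℂ) (α b : ℝ → ℝ)
    (f : (Set.Icc (0 : ℝ) (2 * π) → ℝ) → ℂ) (x : Set.Icc (0 : ℝ) (2 * π) → ℝ) : ℂ :=
  Complex.exp (((-(1 / (4 * t)) * ∫ u in (0 : ℝ)..(2 * π), (deriv α u) ^ 2)
      - (1 / (2 * t)) * wienerPairing α x : ℝ)) *
  Complex.exp (∫ u in (0 : ℝ)..(2 * π), lam u * (b u : ℂ) *
      Complex.exp ((pathExt x u : ℝ) : ℂ)) *
  f (x + fun u => α u.1)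

/-- The maps `ρ_λ` form a representation of the based path group of the `ax+b` group:
`ρ_λ(α₁,b₁) ∘ ρ_λ(α₂,b₂) = ρ_λ(α₁+α₂, e^{α₁}b₂ + b₁)` pointwise on all functionals
`f : C₀ → ℂ` (evaluated at points of `C₀`, i.e. continuous paths vanishing at `0`). -/
theorem wienerRho_mul (t : ℝ) (ht : 0 < t) (lam : ℝ → ℂ)
    (hlamRe : MemLp (fun u => (lam u).re) 2 (volume.restrict (Set.Ioc 0 (2 * π))))
    (hlamIm : MemLp (fun u => (lam u).im) 2 (volume.restrict (Set.Ioc 0 (2 * π))))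
    (α₁ α₂ : ℝ → ℝ) (hα₁ : ContDiff ℝ 2 α₁) (hα₂ : ContDiff ℝ 2 α₂)
    (hα₁0 : α₁ 0 = 0) (hα₂0 : α₂ 0 = 0)
    (b₁ b₂ : ℝ → ℝ) (hb₁ : MemLp b₁ 2 (volume.restrict (Set.Ioc 0 (2 * π))))
    (hb₂ : MemLp b₂ 2 (volume.restrict (Set.Ioc 0 (2 * π))))
    (f : (Set.Icc (0 : ℝ) (2 * π) → ℝ) → ℂ)
    (x : Set.Icc (0 : ℝ) (2 * π) → ℝ) (hx : Continuous x)
    (hx0 : x ⟨0, Set.left_mem_Icc.mpr (by positivity)⟩ = 0) :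
    wienerRho t lam α₁ b₁ (wienerRho t lam α₂ b₂ f) x
      = wienerRho t lam (α₁ + α₂) (fun u => Real.exp (α₁ u) * b₂ u + b₁ u) f x := by
  have hc : (0:ℝ) ≤ 2 * π := two_pi_nonneg
  set y : Set.Icc (0 : ℝ) (2 * π) → ℝ := x + fun u => α₁ u.1 with hy_def
  have hy : Continuous y := hx.add (hα₁.continuous.comp continuous_subtype_val)
  have hyP : ∀ u ∈ Set.Icc (0:ℝ) (2*π), pathExt y u = pathExt x u + α₁ u := by
    intro u hu
    unfold pathExt
    rw [dif_pos hu, dif_pos hu]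
    rfl
  have h2pi_mem : (2*π) ∈ Set.Icc (0:ℝ) (2*π) := Set.right_mem_Icc.mpr hc
  -- differentiability facts
  have hd₁ : Differentiable ℝ α₁ := hα₁.differentiable (by norm_num)
  have hd₂ : Differentiable ℝ α₂ := hα₂.differentiable (by norm_num)
  have hcd₁ : Continuous (deriv α₁) := hα₁.continuous_deriv (by norm_num)
  have hcd₂ : Continuous (deriv α₂) := hα₂.continuous_deriv (by norm_num)
  have h1α₁ : ContDiff ℝ 1 (deriv α₁) := by
    have h2 : ContDiff ℝ ((1:ℕ) + 1) α₁ := by exact_mod_cast hα₁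
    exact (contDiff_succ_iff_deriv.mp h2).2.2
  have h1α₂ : ContDiff ℝ 1 (deriv α₂) := by
    have h2 : ContDiff ℝ ((1:ℕ) + 1) α₂ := by exact_mod_cast hα₂
    exact (contDiff_succ_iff_deriv.mp h2).2.2
  have hdd₁ : Differentiable ℝ (deriv α₁) := h1α₁.differentiable one_ne_zero
  have hdd₂ : Differentiable ℝ (deriv α₂) := h1α₂.differentiable one_ne_zero
  have hcdd₁ : Continuous (deriv (deriv α₁)) := h1α₁.continuous_deriv le_rfl
  have hcdd₂ : Continuous (deriv (deriv α₂)) := h1α₂.continuous_deriv le_rfl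
  have hsum1 : deriv (α₁ + α₂) = fun u => deriv α₁ u + deriv α₂ u := by
    funext u
    have h : (α₁ + α₂) = fun v => α₁ v + α₂ v := rfl
    rw [h, deriv_fun_add (hd₁ u) (hd₂ u)]
  have hsum2 : deriv (deriv (α₁ + α₂)) = fun u => deriv (deriv α₁) u + deriv (deriv α₂) u := by
    funext u
    rw [hsum1, deriv_fun_add (hdd₁ u) (hdd₂ u)]
  -- integrabilities
  have iP₁ : IntervalIntegrable (fun u => pathExt x u * deriv (deriv α₁) u) volume 0 (2*π) :=
    intervalIntegrable_pathExt_mul x hx _ hcdd₁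
  have iP₂ : IntervalIntegrable (fun u => pathExt x u * deriv (deriv α₂) u) volume 0 (2*π) :=
    intervalIntegrable_pathExt_mul x hx _ hcdd₂
  have iA₂ : IntervalIntegrable (fun u => α₁ u * deriv (deriv α₂) u) volume 0 (2*π) :=
    (hα₁.continuous.mul hcdd₂).intervalIntegrable 0 (2*π)
  -- integration by parts
  have hIBP : ∫ u in (0:ℝ)..(2*π), α₁ u * deriv (deriv α₂) u
      = α₁ (2*π) * deriv α₂ (2*π) - ∫ u in (0:ℝ)..(2*π), deriv α₁ u * deriv α₂ u := by
    have := intervalIntegral.integral_mul_deriv_eq_deriv_mul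
      (u := α₁) (v := deriv α₂) (u' := deriv α₁) (v' := deriv (deriv α₂))
      (fun u _ => (hd₁ u).hasDerivAt)
      (fun u _ => (hdd₂ u).hasDerivAt)
      (hcd₁.intervalIntegrable 0 (2*π)) (hcdd₂.intervalIntegrable 0 (2*π))
    rw [this, hα₁0]
    ring
  -- splitting of the quadratic term
  have hQ : (∫ u in (0:ℝ)..(2*π), (deriv (α₁ + α₂) u) ^ 2)
      = (∫ u in (0:ℝ)..(2*π), (deriv α₁ u) ^ 2) + (∫ u in (0:ℝ)..(2*π), (deriv α₂ u) ^ 2)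
        + 2 * ∫ u in (0:ℝ)..(2*π), deriv α₁ u * deriv α₂ u := by
    have h1 : (∫ u in (0:ℝ)..(2*π), (deriv (α₁ + α₂) u) ^ 2)
        = ∫ u in (0:ℝ)..(2*π),
            ((deriv α₁ u) ^ 2 + ((deriv α₂ u) ^ 2 + 2 * (deriv α₁ u * deriv α₂ u))) := by
      refine intervalIntegral.integral_congr (fun u _ => ?_)
      rw [hsum1]
      ring
    rw [h1, intervalIntegral.integral_add (f := fun u => deriv α₁ u ^ 2)
      (g := fun u => deriv α₂ u ^ 2 + 2 * (deriv α₁ u * deriv α₂ u)) ((hcd₁.pow 2).intervalIntegrable 0 (2*π))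
      (((hcd₂.pow 2).add ((continuous_const.mul (hcd₁.mul hcd₂)))).intervalIntegrable 0 (2*π)),
      intervalIntegral.integral_add (f := fun u => deriv α₂ u ^ 2)
      (g := fun u => 2 * (deriv α₁ u * deriv α₂ u)) ((hcd₂.pow 2).intervalIntegrable 0 (2*π))
      ((continuous_const.mul (hcd₁.mul hcd₂)).intervalIntegrable 0 (2*π)),
      intervalIntegral.integral_const_mul]
    ring
  -- splitting of the pairings
  have hW12 : wienerPairing (α₁ + α₂) x = wienerPairing α₁ x + wienerPairing α₂ x := by
    unfold wienerPairing
    have h1 : (∫ u in (0:ℝ)..(2*π), pathExt x u * deriv (deriv (α₁ + α₂)) u)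
        = ∫ u in (0:ℝ)..(2*π),
            (pathExt x u * deriv (deriv α₁) u + pathExt x u * deriv (deriv α₂) u) := by
      refine intervalIntegral.integral_congr (fun u _ => ?_)
      rw [hsum2]
      ring
    rw [h1, intervalIntegral.integral_add iP₁ iP₂]
    simp only [hsum1]
    ring
  have hWy : wienerPairing α₂ y = wienerPairing α₂ x
      + (deriv α₂ (2*π) * α₁ (2*π) - ∫ u in (0:ℝ)..(2*π), α₁ u * deriv (deriv α₂) u) := by
    unfold wienerPairing
    rw [hyP (2*π) h2pi_mem]
    have h1 : (∫ u in (0:ℝ)..(2*π), pathExt y u * deriv (deriv α₂) u)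
        = ∫ u in (0:ℝ)..(2*π),
            (pathExt x u * deriv (deriv α₂) u + α₁ u * deriv (deriv α₂) u) := by
      refine intervalIntegral.integral_congr (fun u hu => ?_)
      rw [Set.uIcc_of_le hc] at hu
      rw [hyP u hu]
      ring
    rw [h1, intervalIntegral.integral_add iP₂ iA₂]
    ring
  -- real exponent identity
  have hr : ((-(1 / (4 * t)) * ∫ u in (0:ℝ)..(2*π), (deriv α₁ u) ^ 2)
        - (1 / (2 * t)) * wienerPairing α₁ x)
      + ((-(1 / (4 * t)) * ∫ u in (0:ℝ)..(2*π), (deriv α₂ u) ^ 2)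
        - (1 / (2 * t)) * wienerPairing α₂ y)
      = (-(1 / (4 * t)) * ∫ u in (0:ℝ)..(2*π), (deriv (α₁ + α₂) u) ^ 2)
        - (1 / (2 * t)) * wienerPairing (α₁ + α₂) x := by
    rw [hQ, hW12, hWy, hIBP]
    have htne : t ≠ 0 := ne_of_gt ht
    field_simp
    ring
  -- complex integral identity
  have ic₁ : IntervalIntegrable
      (fun u => lam u * (b₁ u : ℂ) * Complex.exp ((pathExt x u : ℝ) : ℂ)) volume 0 (2*π) :=
    intervalIntegrable_main lam hlamRe hlamIm b₁ hb₁ (pathExt x)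
      (pathExt_measurable x hx) (pathExt_bound x hx)
  have ic₂ : IntervalIntegrable
      (fun u => lam u * (b₂ u : ℂ) * Complex.exp ((pathExt y u : ℝ) : ℂ)) volume 0 (2*π) :=
    intervalIntegrable_main lam hlamRe hlamIm b₂ hb₂ (pathExt y)
      (pathExt_measurable y hy) (pathExt_bound y hy)
  have hcc : (∫ u in (0:ℝ)..(2*π), lam u * (b₁ u : ℂ) * Complex.exp ((pathExt x u : ℝ) : ℂ))
      + (∫ u in (0:ℝ)..(2*π), lam u * (b₂ u : ℂ) * Complex.exp ((pathExt y u : ℝ) : ℂ))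
      = ∫ u in (0:ℝ)..(2*π), lam u * ((Real.exp (α₁ u) * b₂ u + b₁ u : ℝ) : ℂ)
          * Complex.exp ((pathExt x u : ℝ) : ℂ) := by
    rw [← intervalIntegral.integral_add ic₁ ic₂]
    refine intervalIntegral.integral_congr (fun u hu => ?_)
    rw [Set.uIcc_of_le hc] at hu
    rw [hyP u hu]
    push_cast [Complex.ofReal_exp, Complex.exp_add]
    ring
  -- function argument identity
  have hY : (y + fun u => α₂ u.1) = x + fun u => (α₁ + α₂) u.1 := by
    funext u
    simp only [hy_def, Pi.add_apply]
    ring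
  -- assemble
  have key : ∀ (r₁ r₂ r : ℝ) (c₁ c₂ cR : ℂ) (F : ℂ), r₁ + r₂ = r → c₁ + c₂ = cR →
      Complex.exp (r₁ : ℂ) * Complex.exp c₁ * (Complex.exp (r₂ : ℂ) * Complex.exp c₂ * F)
        = Complex.exp (r : ℂ) * Complex.exp cR * F := by
    intro r₁ r₂ r c₁ c₂ cR F h1 h2
    rw [← h1, ← h2, Complex.ofReal_add, Complex.exp_add, Complex.exp_add]
    ring
  show Complex.exp _ * Complex.exp _ * wienerRho t lam α₂ b₂ f y = _
  unfold wienerRho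
  rw [hY]
  exact key _ _ _ _ _ _ _ hr hcc
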